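/- For every ε ≥ 0, the set K_{nc,ε} of matrices M ∈ Sⁿ for which p_M + ε belongs to the tracial quadratic module of the ball is convex, and ⋂_{ε>0} K_{nc,ε} ⊆ CS₊ⁿ*. -/

import Mathlib

open Matrix

/-- Free real algebra in `n` non-commuting variables. -/
abbrev NC (n : ℕ) := FreeAlgebra ℝ (Fin n)

noncomputable def ncX {n : ℕ} (i : Fin n) : NC n := FreeAlgebra.ι ℝ i

/-- The involution `*` reversing the order of variables in each monomial. -/
noncomputable def ncStarHom (n : ℕ) : NC n →ₐ[ℝ] (NC n)ᵐᵒᵖ :=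
  FreeAlgebra.lift ℝ (fun i => MulOpposite.op (FreeAlgebra.ι ℝ i))

noncomputable def ncStar {n : ℕ} (f : NC n) : NC n := MulOpposite.unop (ncStarHom n f)

/-- `h` is a sum of commutators `[f,g] = fg − gf`. -/
def IsSumOfCommutators {n : ℕ} (h : NC n) : Prop :=
  ∃ (m : ℕ) (f g : Fin m → NC n), h = ∑ k, (f k * g k - g k * f k)

/-- Membership in the tracial quadratic module of the ball, generated by `1 − Σᵢ Xᵢ²`:
sums of commutators, Hermitian squares `f f*`, and terms `g (1 − Σᵢ Xᵢ²) g*`. -/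
def InTrMBall {n : ℕ} (p : NC n) : Prop :=
  ∃ (h : NC n) (m₀ m₁ : ℕ) (f : Fin m₀ → NC n) (g : Fin m₁ → NC n),
    IsSumOfCommutators h ∧
    p = h + (∑ j, f j * ncStar (f j)) +
        ∑ j, g j * (1 - ∑ i, (ncX i) ^ 2) * ncStar (g j)

/-- The polynomial `p_M = Σ_{i,j} M_{ij} X_i² X_j²`. -/
noncomputable def pM {n : ℕ} (M : Matrix (Fin n) (Fin n) ℝ) : NC n :=
  ∑ i, ∑ j, M i j • ((ncX i) ^ 2 * (ncX j) ^ 2)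

/-- The convex set `K_{nc,ε}` of matrices `M` with `p_M + ε` in the tracial module of the ball. -/
def Knc (n : ℕ) (ε : ℝ) : Set (Matrix (Fin n) (Fin n) ℝ) :=
  {M | InTrMBall (pM M + algebraMap ℝ (NC n) ε)}

/-- The dual cone `CS₊ⁿ*`. -/
def InDualCSplus {n : ℕ} (M : Matrix (Fin n) (Fin n) ℝ) : Prop :=
  ∀ (d : ℕ) (X : Fin n → Matrix (Fin d) (Fin d) ℝ), (∀ i, (X i).PosSemidef) →
    0 ≤ ∑ i, ∑ j, M i j * ((X i) * (X j)).trace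

lemma ncStar_smul {n : ℕ} (c : ℝ) (f : NC n) : ncStar (c • f) = c • ncStar f := by
  simp [ncStar, _root_.map_smul]

lemma ev_ncStar {n d : ℕ} (Y : Fin n → Matrix (Fin d) (Fin d) ℝ)
    (hY : ∀ i, (Y i)ᵀ = Y i) (f : NC n) :
    (FreeAlgebra.lift ℝ Y) (ncStar f) = ((FreeAlgebra.lift ℝ Y) f)ᵀ := by
  have key : (AlgHom.op (FreeAlgebra.lift ℝ Y)).comp (ncStarHom n) =
      ((transposeAlgEquiv (Fin d) ℝ ℝ).toAlgHom).comp (FreeAlgebra.lift ℝ Y) := by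
    apply FreeAlgebra.hom_ext
    funext i
    simp [ncStarHom, AlgHom.op, transposeAlgEquiv, hY i]
  have := congrArg (fun φ => MulOpposite.unop (φ f)) (congrArg (·.toFun) key)
  simpa [ncStar, AlgHom.op, transposeAlgEquiv] using this

lemma psd_trace_nonneg {d : ℕ} {A : Matrix (Fin d) (Fin d) ℝ} (hA : A.PosSemidef) :
    0 ≤ A.trace := by
  rw [Matrix.trace]
  apply Finset.sum_nonneg
  intro i _
  have := hA.dotProduct_mulVec_nonneg (Pi.single i 1)
  simpa [Matrix.mulVec_single, single_dotProduct] using this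

lemma trace_ev_nonneg {n d : ℕ} (Y : Fin n → Matrix (Fin d) (Fin d) ℝ)
    (hY : ∀ i, (Y i)ᵀ = Y i) (hball : (1 - ∑ i, (Y i) ^ 2).PosSemidef)
    {p : NC n} (hp : InTrMBall p) : 0 ≤ ((FreeAlgebra.lift ℝ Y) p).trace := by
  obtain ⟨h, m₀, m₁, f, g, ⟨m, u, v, hcomm⟩, hp⟩ := hp
  set ev := FreeAlgebra.lift ℝ Y with hev
  have hP : ev (1 - ∑ i, (ncX i) ^ 2) = 1 - ∑ i, (Y i) ^ 2 := by
    simp [hev, ncX, map_sum, FreeAlgebra.lift_ι_apply]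
  have htr_h : (ev h).trace = 0 := by
    rw [hcomm]
    rw [map_sum, Matrix.trace_sum]
    apply Finset.sum_eq_zero
    intro k _
    simp [Matrix.trace_sub, Matrix.trace_mul_comm (ev (u k)) (ev (v k))]
  rw [hp]
  rw [map_add, map_add, Matrix.trace_add, Matrix.trace_add, htr_h, zero_add]
  apply add_nonneg
  · rw [map_sum, Matrix.trace_sum]
    apply Finset.sum_nonneg
    intro j _
    rw [_root_.map_mul, ev_ncStar Y hY]
    have : (ev (f j) * (ev (f j))ᵀ).PosSemidef := by
      have := Matrix.PosSemidef.one.mul_mul_conjTranspose_same (ev (f j))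
        (A := (1 : Matrix (Fin d) (Fin d) ℝ))
      simpa [Matrix.conjTranspose_eq_transpose_of_trivial] using this
    exact psd_trace_nonneg this
  · rw [map_sum, Matrix.trace_sum]
    apply Finset.sum_nonneg
    intro j _
    rw [_root_.map_mul, _root_.map_mul, ev_ncStar Y hY, hP]
    have := hball.mul_mul_conjTranspose_same (ev (g j))
    simp only [Matrix.conjTranspose_eq_transpose_of_trivial] at this
    exact psd_trace_nonneg this

lemma psd_exists_sqrt {d : ℕ} {A : Matrix (Fin d) (Fin d) ℝ} (hA : A.PosSemidef) :
    ∃ B : Matrix (Fin d) (Fin d) ℝ, Bᵀ = B ∧ B * B = A := by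
  open scoped MatrixOrder in
  exact ⟨CFC.sqrt A, by
    rw [← Matrix.conjTranspose_eq_transpose_of_trivial]
    exact (CFC.sqrt_nonneg A).posSemidef.isHermitian.eq,
    CFC.sqrt_mul_sqrt_self A hA.nonneg⟩

lemma exists_shrink {d : ℕ} {A : Matrix (Fin d) (Fin d) ℝ} (hA : A.PosSemidef) :
    ∃ s : ℝ, 0 < s ∧ (1 - s • A).PosSemidef := by
  obtain ⟨B, hBt, hBB⟩ := psd_exists_sqrt hA
  have hB : A = Bᴴ * B := by rw [Matrix.conjTranspose_eq_transpose_of_trivial, hBt, hBB]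
  set T : ℝ := ∑ i, ∑ j, (B i j) ^ 2 with hT
  have hT0 : 0 ≤ T := Finset.sum_nonneg fun i _ => Finset.sum_nonneg fun j _ => sq_nonneg _
  refine ⟨1 / (T + 1), by positivity, ?_⟩
  refine Matrix.PosSemidef.of_dotProduct_mulVec_nonneg ?_ ?_
  · have : (1 - (1 / (T + 1)) • A)ᴴ = 1 - (1 / (T + 1)) • Aᴴ := by
      simp [Matrix.conjTranspose_sub, Matrix.conjTranspose_smul]
    rw [Matrix.IsHermitian, this, hA.1]
  · intro x
    have hxx : (0:ℝ) ≤ x ⬝ᵥ x := Finset.sum_nonneg fun i _ => mul_self_nonneg _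
    have hquad : x ⬝ᵥ (A *ᵥ x) = (B *ᵥ x) ⬝ᵥ (B *ᵥ x) := by
      rw [hB, ← Matrix.mulVec_mulVec, Matrix.dotProduct_mulVec,
        Matrix.conjTranspose_eq_transpose_of_trivial, Matrix.vecMul_transpose]
    have hbound : (B *ᵥ x) ⬝ᵥ (B *ᵥ x) ≤ T * (x ⬝ᵥ x) := by
      have h1 : ∀ i, (B *ᵥ x) i * (B *ᵥ x) i ≤ (∑ j, (B i j)^2) * (x ⬝ᵥ x) := by
        intro i
        have := Finset.sum_mul_sq_le_sq_mul_sq Finset.univ (fun j => B i j) x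
        calc (B *ᵥ x) i * (B *ᵥ x) i = (∑ j, B i j * x j) ^ 2 := by
              simp [Matrix.mulVec, dotProduct, sq]
          _ ≤ (∑ j, (B i j)^2) * ∑ j, (x j)^2 := this
          _ = (∑ j, (B i j)^2) * (x ⬝ᵥ x) := by
              congr 1; simp [dotProduct, sq]
      calc (B *ᵥ x) ⬝ᵥ (B *ᵥ x) = ∑ i, (B *ᵥ x) i * (B *ᵥ x) i := rfl
        _ ≤ ∑ i, (∑ j, (B i j)^2) * (x ⬝ᵥ x) := Finset.sum_le_sum fun i _ => h1 i
        _ = T * (x ⬝ᵥ x) := by rw [hT, Finset.sum_mul]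
    have expand : star x ⬝ᵥ ((1 - (1 / (T + 1)) • A) *ᵥ x)
        = x ⬝ᵥ x - (1 / (T + 1)) * (x ⬝ᵥ (A *ᵥ x)) := by
      simp [Matrix.sub_mulVec, Matrix.smul_mulVec, dotProduct_sub,
        dotProduct_smul, smul_eq_mul]
    rw [expand, hquad]
    have h2 : (1 / (T + 1)) * ((B *ᵥ x) ⬝ᵥ (B *ᵥ x)) ≤ x ⬝ᵥ x := by
      have hTpos : (0:ℝ) < T + 1 := by linarith
      rw [div_mul_eq_mul_div, one_mul, div_le_iff₀ hTpos]
      calc (B *ᵥ x) ⬝ᵥ (B *ᵥ x) ≤ T * (x ⬝ᵥ x) := hbound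
        _ ≤ x ⬝ᵥ x * (T + 1) := by nlinarith
    linarith

lemma IsSumOfCommutators.add' {n : ℕ} {h₁ h₂ : NC n}
    (H1 : IsSumOfCommutators h₁) (H2 : IsSumOfCommutators h₂) :
    IsSumOfCommutators (h₁ + h₂) := by
  obtain ⟨m, f, g, rfl⟩ := H1
  obtain ⟨m', f', g', rfl⟩ := H2
  exact ⟨m + m', Fin.append f f', Fin.append g g', by
    simp only [Fin.sum_univ_add, Fin.append_left, Fin.append_right]⟩

lemma IsSumOfCommutators.smul' {n : ℕ} {h : NC n} (c : ℝ)
    (H : IsSumOfCommutators h) : IsSumOfCommutators (c • h) := by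
  obtain ⟨m, f, g, rfl⟩ := H
  refine ⟨m, fun k => c • f k, g, ?_⟩
  rw [Finset.smul_sum]
  congr 1
  funext k
  rw [smul_sub, smul_mul_assoc, mul_smul_comm]

lemma InTrMBall.add' {n : ℕ} {p q : NC n} (hp : InTrMBall p) (hq : InTrMBall q) :
    InTrMBall (p + q) := by
  obtain ⟨h, m₀, m₁, f, g, hcom, rfl⟩ := hp
  obtain ⟨h', m₀', m₁', f', g', hcom', rfl⟩ := hq
  refine ⟨h + h', m₀ + m₀', m₁ + m₁', Fin.append f f', Fin.append g g',
    hcom.add' hcom', ?_⟩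
  simp only [Fin.sum_univ_add, Fin.append_left, Fin.append_right]
  abel

lemma InTrMBall.smul' {n : ℕ} {p : NC n} {c : ℝ} (hc : 0 ≤ c) (hp : InTrMBall p) :
    InTrMBall (c • p) := by
  obtain ⟨h, m₀, m₁, f, g, hcom, rfl⟩ := hp
  set r := Real.sqrt c with hr
  have hrr : r * r = c := Real.mul_self_sqrt hc
  refine ⟨c • h, m₀, m₁, fun j => r • f j, fun j => r • g j, hcom.smul' c, ?_⟩
  have h1 : ∀ j, (r • f j) * ncStar (r • f j) = c • (f j * ncStar (f j)) := by
    intro j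
    rw [ncStar_smul, smul_mul_assoc, mul_smul_comm, smul_smul, hrr]
  have h2 : ∀ j, (r • g j) * (1 - ∑ i, (ncX i) ^ 2) * ncStar (r • g j)
      = c • (g j * (1 - ∑ i, (ncX i) ^ 2) * ncStar (g j)) := by
    intro j
    rw [ncStar_smul, smul_mul_assoc, smul_mul_assoc, mul_smul_comm, smul_smul, hrr]
  simp only [h1, h2, ← Finset.smul_sum, ← smul_add]

lemma pM_comb {n : ℕ} (a b : ℝ) (M N : Matrix (Fin n) (Fin n) ℝ) :
    pM (a • M + b • N) = a • pM M + b • pM N := by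
  simp only [pM, Finset.smul_sum, ← Finset.sum_add_distrib]
  congr 1; funext i; congr 1; funext j
  simp [Matrix.add_apply, Matrix.smul_apply, add_smul, smul_smul, smul_eq_mul]

/-- For every `ε ≥ 0` the set `K_{nc,ε}` is convex, and `⋂_{ε>0} K_{nc,ε} ⊆ CS₊ⁿ*`. -/
theorem Knc_convex_and_inter_subset_dual (n : ℕ) :
    (∀ ε : ℝ, 0 ≤ ε → Convex ℝ (Knc n ε)) ∧
    {M : Matrix (Fin n) (Fin n) ℝ | ∀ ε : ℝ, 0 < ε → M ∈ Knc n ε} ⊆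
      {M | InDualCSplus M} := by
  constructor
  · intro ε hε M hM N hN a b ha hb hab
    show InTrMBall (pM (a • M + b • N) + algebraMap ℝ (NC n) ε)
    have hcomb : pM (a • M + b • N) + algebraMap ℝ (NC n) ε
        = a • (pM M + algebraMap ℝ (NC n) ε) + b • (pM N + algebraMap ℝ (NC n) ε) := by
      rw [pM_comb, smul_add, smul_add]
      have : a • algebraMap ℝ (NC n) ε + b • algebraMap ℝ (NC n) ε
          = algebraMap ℝ (NC n) ε := by
        rw [← add_smul, hab, one_smul]
      rw [add_add_add_comm, this]
    rw [hcomb]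
    exact (InTrMBall.smul' ha hM).add' (InTrMBall.smul' hb hN)
  · intro M hM
    intro d X hX
    have hA : (∑ i, X i).PosSemidef :=
      Finset.sum_induction X Matrix.PosSemidef (fun a b ha hb => ha.add hb)
        Matrix.PosSemidef.zero (fun i _ => hX i)
    obtain ⟨s, hs, hball⟩ := exists_shrink hA
    set c := Real.sqrt s with hc
    have hc2 : c * c = s := Real.mul_self_sqrt hs.le
    choose R hRt hRR using fun i => psd_exists_sqrt (hX i)
    set Y : Fin n → Matrix (Fin d) (Fin d) ℝ := fun i => c • R i with hYdef
    have hYt : ∀ i, (Y i)ᵀ = Y i := by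
      intro i
      rw [hYdef]
      simp only [Matrix.transpose_smul]
      rw [hRt i]
    have hYsq : ∀ i, (Y i) ^ 2 = s • X i := by
      intro i
      rw [hYdef]
      simp only [pow_two]
      rw [Matrix.smul_mul, Matrix.mul_smul, smul_smul, hc2, hRR i]
    have hball' : (1 - ∑ i, (Y i) ^ 2).PosSemidef := by
      simp only [hYsq]
      rw [← Finset.smul_sum]
      exact hball
    set S : ℝ := ∑ i, ∑ j, M i j * ((X i) * (X j)).trace with hS
    have key : ∀ ε : ℝ, 0 < ε → 0 ≤ (s * s) * S + ε * d := by
      intro ε hε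
      have h0 := trace_ev_nonneg Y hYt hball' (hM ε hε)
      have hcalc : ((FreeAlgebra.lift ℝ Y) (pM M + algebraMap ℝ (NC n) ε)).trace
          = (s * s) * S + ε * d := by
        rw [map_add, Matrix.trace_add]
        congr 1
        · simp only [pM, map_sum, _root_.map_smul, _root_.map_mul, map_pow, ncX,
            FreeAlgebra.lift_ι_apply, hYsq]
          simp only [Matrix.smul_mul, Matrix.mul_smul, smul_smul, Matrix.trace_sum,
            Matrix.trace_smul, smul_eq_mul, hS, Finset.mul_sum]
          apply Finset.sum_congr rfl; intro i _
          apply Finset.sum_congr rfl; intro j _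
          ring
        · rw [AlgHom.commutes, Algebra.algebraMap_eq_smul_one, Matrix.trace_smul,
            Matrix.trace_one, smul_eq_mul, Fintype.card_fin]
      rw [hcalc] at h0
      exact h0
    have hmain : 0 ≤ (s * s) * S := by
      refine le_of_forall_pos_le_add ?_
      intro δ hδ
      have h1 := key (δ / (d + 1)) (by positivity)
      have h2 : (δ / (d + 1)) * d ≤ δ := by
        rw [div_mul_eq_mul_div, div_le_iff₀ (by positivity)]
        nlinarith [Nat.cast_nonneg (α := ℝ) d]
      linarith
    nlinarith [mul_pos hs hs]
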